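/- Let S be an n×n real symmetric positive definite matrix and G an n×m real matrix of full column rank, and set P := I − G (Gᵀ S G)⁻¹ Gᵀ S. Then the inverse of S splits as S⁻¹ = P S⁻¹ Pᵀ + (I − P) S⁻¹ (I − P)ᵀ. -/

import Mathlib

open Matrix

lemma aux_posdef {n m : Type*} [Fintype n] [Fintype m] [DecidableEq n] [DecidableEq m]
    (S : Matrix n n ℝ) (G : Matrix n m ℝ) (hS : S.PosDef)
    (hG : Function.Injective G.mulVec) : (Gᵀ * S * G).PosDef := by
  refine PosDef.of_dotProduct_mulVec_pos ?_ ?_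
  · have h := (hS.posSemidef.conjTranspose_mul_mul_same G).1
    simpa using h
  · intro x hx
    have hGx : G *ᵥ x ≠ 0 := by
      intro h
      apply hx
      apply hG
      simpa [mulVec_zero] using h
    have := hS.dotProduct_mulVec_pos hGx
    simpa [star_mulVec, dotProduct_mulVec, ← Matrix.vecMul_vecMul, Matrix.vecMul_transpose] using this

/-- For `S` symmetric positive definite and `G` injective, with
`P := I − G (Gᵀ S G)⁻¹ Gᵀ S`, the inverse of `S` splits as
`S⁻¹ = P S⁻¹ Pᵀ + (I − P) S⁻¹ (I − P)ᵀ`. -/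
theorem stmt_9 {n m : Type*} [Fintype n] [Fintype m] [DecidableEq n] [DecidableEq m]
    (S : Matrix n n ℝ) (G : Matrix n m ℝ)
    (hSsym : Sᵀ = S) (hS : S.PosDef)
    (hG : Function.Injective G.mulVec) :
    let P : Matrix n n ℝ := 1 - G * (Gᵀ * S * G)⁻¹ * Gᵀ * S
    S⁻¹ = P * S⁻¹ * Pᵀ + (1 - P) * S⁻¹ * (1 - P)ᵀ := by
  intro P
  set B := Gᵀ * S * G with hBdef
  have hBpd : B.PosDef := aux_posdef S G hS hG
  have hBsym : Bᵀ = B := by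
    simp [hBdef, transpose_mul, hSsym, Matrix.mul_assoc]
  have hAsym : (B⁻¹)ᵀ = B⁻¹ := by
    rw [transpose_nonsing_inv, hBsym]
  have hAB : B⁻¹ * B = 1 := nonsing_inv_mul B (isUnit_iff_isUnit_det B |>.mp hBpd.isUnit)
  have hSS : S * S⁻¹ = 1 := mul_nonsing_inv S (isUnit_iff_isUnit_det S |>.mp hS.isUnit)
  have hSS' : S⁻¹ * S = 1 := nonsing_inv_mul S (isUnit_iff_isUnit_det S |>.mp hS.isUnit)
  set Q : Matrix n n ℝ := G * B⁻¹ * Gᵀ * S with hQdef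
  have hPQ : P = 1 - Q := rfl
  set K : Matrix n n ℝ := G * B⁻¹ * Gᵀ with hKdef
  have hQt : Qᵀ = S * K := by
    simp [hQdef, hKdef, transpose_mul, hSsym, hAsym, Matrix.mul_assoc]
  have hq1 : Q * S⁻¹ = K := by
    rw [hQdef, Matrix.mul_assoc, hSS, Matrix.mul_one]
  have hq2 : S⁻¹ * Qᵀ = K := by
    rw [hQt, ← Matrix.mul_assoc, hSS', Matrix.one_mul]
  have hq3 : Q * S⁻¹ * Qᵀ = K := by
    rw [hq1, hQt, hKdef]
    calc G * B⁻¹ * Gᵀ * (S * (G * B⁻¹ * Gᵀ))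
        = G * (B⁻¹ * (Gᵀ * S * G)) * (B⁻¹ * Gᵀ) := by
          simp only [Matrix.mul_assoc]
      _ = G * B⁻¹ * Gᵀ := by rw [← hBdef, hAB, Matrix.mul_one, Matrix.mul_assoc]
  rw [hPQ]
  have h1 : (1 - Q) * S⁻¹ * (1 - Q)ᵀ = S⁻¹ - K := by
    simp only [transpose_sub, transpose_one, Matrix.sub_mul, Matrix.mul_sub,
      Matrix.one_mul, Matrix.mul_one]
    have hq3' := hq3
    rw [hq1] at hq3'
    rw [hq1, hq2, hq3']
    abel
  have h2 : (1 - (1 - Q)) * S⁻¹ * (1 - (1 - Q))ᵀ = K := by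
    rw [sub_sub_cancel, hq3]
  rw [h1, h2]
  abel
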